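/- If a bounded symmetric positivity preserving operator T on L²(E,m) with an irreducible semigroup satisfies φ·Tf = T(φ·f) for all f ∈ L²(E,m), where φ is a bounded measurable positive function, and (T_t) is irreducible, then φ is constant m-a.e. -/

import Mathlib

open MeasureTheory
open scoped NNReal

/-- A set `A` is `T_t`-invariant. -/
def IsInvariantSet {E : Type*} [MeasurableSpace E] (m : Measure E)
    (T : ℝ≥0 → (Lp ℝ 2 m →L[ℝ] Lp ℝ 2 m)) (A : Set E) : Prop :=
  ∀ t : ℝ≥0, ∀ f g : Lp ℝ 2 m, (g : E → ℝ) =ᵐ[m] A.indicator f →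
    (T t g : E → ℝ) =ᵐ[m] A.indicator (T t f)

/-- A semigroup `(T_t)` is irreducible if all `T_t`-invariant sets are trivial up to
null sets. -/
def IsIrreducibleSemigroup {E : Type*} [MeasurableSpace E] (m : Measure E)
    (T : ℝ≥0 → (Lp ℝ 2 m →L[ℝ] Lp ℝ 2 m)) : Prop :=
  ∀ A : Set E, MeasurableSet A → IsInvariantSet m T A → m A = 0 ∨ m Aᶜ = 0

section Aux
variable {E : Type*} [MeasurableSpace E] {m : Measure E}
  {T : ℝ≥0 → (Lp ℝ 2 m →L[ℝ] Lp ℝ 2 m)}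
  {φ : E → ℝ} {c : ℝ}

lemma aux_upper_nonneg
    (hTpos : ∀ t, ∀ f : Lp ℝ 2 m, 0 ≤ f → 0 ≤ T t f)
    (hφmeas : Measurable φ) (hφbd : ∀ x, |φ x| ≤ c)
    (hcomm : ∀ t : ℝ≥0, ∀ f g : Lp ℝ 2 m, (g : E → ℝ) =ᵐ[m] (fun x => φ x * f x) →
      (T t g : E → ℝ) =ᵐ[m] fun x => φ x * (T t f) x)
    (r : ℝ) (t : ℝ≥0) (f : Lp ℝ 2 m) (hf : 0 ≤ f)
    (h : ∀ᵐ x ∂m, 0 ≤ (φ x - r) * f x) :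
    ∀ᵐ x ∂m, φ x < r → (T t f) x = 0 := by
  have memg : MemLp (fun x => φ x * f x) 2 m := by
    refine MemLp.of_le_mul (c := c) (Lp.memLp f)
      (hφmeas.aestronglyMeasurable.mul (Lp.aestronglyMeasurable f)) ?_
    filter_upwards with x
    rw [norm_mul]
    exact mul_le_mul_of_nonneg_right ((Real.norm_eq_abs _).le.trans (hφbd x)) (norm_nonneg _)
  set g : Lp ℝ 2 m := memg.toLp _ with hgdef
  have hg : (g : E → ℝ) =ᵐ[m] fun x => φ x * f x := memg.coeFn_toLp
  have key : 0 ≤ g - r • f := by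
    rw [← Lp.coeFn_nonneg]
    filter_upwards [Lp.coeFn_sub g (r • f), Lp.coeFn_smul r f, hg, h] with x h1 h2 h3 h4
    simp only [Pi.zero_apply, h1, Pi.sub_apply, h2, Pi.smul_apply, smul_eq_mul, h3]
    nlinarith
  have pos2 : 0 ≤ T t (g - r • f) := hTpos _ _ key
  rw [map_sub, (T t).map_smul, ← Lp.coeFn_nonneg] at pos2
  have hTg := hcomm t f g hg
  have hTf : (0 : E → ℝ) ≤ᵐ[m] (T t f) := (Lp.coeFn_nonneg _).2 (hTpos t f hf)
  filter_upwards [pos2, Lp.coeFn_sub (T t g) (r • T t f), Lp.coeFn_smul r (T t f),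
    hTg, hTf] with x h1 h2 h3 h4 h5 hlt
  simp only [Pi.zero_apply, h2, Pi.sub_apply, h3, Pi.smul_apply, smul_eq_mul, h4] at h1
  simp only [Pi.zero_apply] at h5
  nlinarith

lemma aux_lower_nonneg
    (hTpos : ∀ t, ∀ f : Lp ℝ 2 m, 0 ≤ f → 0 ≤ T t f)
    (hφmeas : Measurable φ) (hφbd : ∀ x, |φ x| ≤ c)
    (hcomm : ∀ t : ℝ≥0, ∀ f g : Lp ℝ 2 m, (g : E → ℝ) =ᵐ[m] (fun x => φ x * f x) →
      (T t g : E → ℝ) =ᵐ[m] fun x => φ x * (T t f) x)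
    (r : ℝ) (t : ℝ≥0) (f : Lp ℝ 2 m) (hf : 0 ≤ f)
    (h : ∀ᵐ x ∂m, (φ x - r) * f x ≤ 0) :
    ∀ᵐ x ∂m, r < φ x → (T t f) x = 0 := by
  have memg : MemLp (fun x => φ x * f x) 2 m := by
    refine MemLp.of_le_mul (c := c) (Lp.memLp f)
      (hφmeas.aestronglyMeasurable.mul (Lp.aestronglyMeasurable f)) ?_
    filter_upwards with x
    rw [norm_mul]
    exact mul_le_mul_of_nonneg_right ((Real.norm_eq_abs _).le.trans (hφbd x)) (norm_nonneg _)
  set g : Lp ℝ 2 m := memg.toLp _ with hgdef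
  have hg : (g : E → ℝ) =ᵐ[m] fun x => φ x * f x := memg.coeFn_toLp
  have key : 0 ≤ r • f - g := by
    rw [← Lp.coeFn_nonneg]
    filter_upwards [Lp.coeFn_sub (r • f) g, Lp.coeFn_smul r f, hg, h] with x h1 h2 h3 h4
    simp only [Pi.zero_apply, h1, Pi.sub_apply, h2, Pi.smul_apply, smul_eq_mul, h3]
    nlinarith
  have pos2 : 0 ≤ T t (r • f - g) := hTpos _ _ key
  rw [map_sub, (T t).map_smul, ← Lp.coeFn_nonneg] at pos2
  have hTg := hcomm t f g hg
  have hTf : (0 : E → ℝ) ≤ᵐ[m] (T t f) := (Lp.coeFn_nonneg _).2 (hTpos t f hf)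
  filter_upwards [pos2, Lp.coeFn_sub (r • T t f) (T t g), Lp.coeFn_smul r (T t f),
    hTg, hTf] with x h1 h2 h3 h4 h5 hlt
  simp only [Pi.zero_apply, h2, Pi.sub_apply, h3, Pi.smul_apply, smul_eq_mul, h4] at h1
  simp only [Pi.zero_apply] at h5
  nlinarith

/-- Support version: if `g = 0` a.e. on `{φ ≤ r}`, then `T t g = 0` a.e. on `{φ < r}`. -/
lemma aux_upper
    (hTpos : ∀ t, ∀ f : Lp ℝ 2 m, 0 ≤ f → 0 ≤ T t f)
    (hφmeas : Measurable φ) (hφbd : ∀ x, |φ x| ≤ c)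
    (hcomm : ∀ t : ℝ≥0, ∀ f g : Lp ℝ 2 m, (g : E → ℝ) =ᵐ[m] (fun x => φ x * f x) →
      (T t g : E → ℝ) =ᵐ[m] fun x => φ x * (T t f) x)
    (r : ℝ) (t : ℝ≥0) (g : Lp ℝ 2 m)
    (hsupp : ∀ᵐ x ∂m, φ x ≤ r → (g : E → ℝ) x = 0) :
    ∀ᵐ x ∂m, φ x < r → (T t g) x = 0 := by
  have hpp : 0 ≤ Lp.posPart g := by
    rw [← Lp.coeFn_nonneg]; filter_upwards [Lp.coeFn_posPart g] with x h; simp [h]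
  have hnp : 0 ≤ Lp.negPart g := by
    rw [← Lp.coeFn_nonneg]; filter_upwards [Lp.coeFn_negPart g] with x h
    simp [h, neg_nonneg, min_le_right, le_min_iff]
  have hps : ∀ᵐ x ∂m, 0 ≤ (φ x - r) * (Lp.posPart g) x := by
    filter_upwards [Lp.coeFn_posPart g, hsupp] with x h1 h2
    rcases le_or_gt (φ x) r with hx | hx
    · rw [h1, h2 hx]; simp
    · exact mul_nonneg (by linarith) (h1 ▸ le_max_right _ _)
  have hns : ∀ᵐ x ∂m, 0 ≤ (φ x - r) * (Lp.negPart g) x := by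
    filter_upwards [Lp.coeFn_negPart g, hsupp] with x h1 h2
    rcases le_or_gt (φ x) r with hx | hx
    · rw [h1, h2 hx]; simp
    · refine mul_nonneg (by linarith) ?_
      rw [h1]; simp [le_min_iff, neg_nonneg, min_le_right]
  have h1 := aux_upper_nonneg hTpos hφmeas hφbd hcomm r t (Lp.posPart g) hpp hps
  have h2 := aux_upper_nonneg hTpos hφmeas hφbd hcomm r t (Lp.negPart g) hnp hns
  have hdec : Lp.posPart g - Lp.negPart g = g := by
    apply Lp.ext
    filter_upwards [Lp.coeFn_sub (Lp.posPart g) (Lp.negPart g), Lp.coeFn_posPart g,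
      Lp.coeFn_negPart g] with x ha hb hc
    simp only [ha, Pi.sub_apply, hb, hc]
    rcases le_or_gt (g x) 0 with h | h
    · rw [max_eq_right h, min_eq_left h]; ring
    · rw [max_eq_left h.le, min_eq_right h.le]; ring
  have hsplit : (T t g : E → ℝ) =ᵐ[m]
      fun x => (T t (Lp.posPart g)) x - (T t (Lp.negPart g)) x := by
    conv_lhs => rw [← hdec]
    rw [map_sub]
    exact Lp.coeFn_sub _ _
  filter_upwards [hsplit, h1, h2] with x ha hb hc hlt
  rw [ha, hb hlt, hc hlt, sub_zero]

/-- Support version: if `g = 0` a.e. on `{r < φ}`, then `T t g = 0` a.e. on `{r < φ}`. -/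
lemma aux_lower
    (hTpos : ∀ t, ∀ f : Lp ℝ 2 m, 0 ≤ f → 0 ≤ T t f)
    (hφmeas : Measurable φ) (hφbd : ∀ x, |φ x| ≤ c)
    (hcomm : ∀ t : ℝ≥0, ∀ f g : Lp ℝ 2 m, (g : E → ℝ) =ᵐ[m] (fun x => φ x * f x) →
      (T t g : E → ℝ) =ᵐ[m] fun x => φ x * (T t f) x)
    (r : ℝ) (t : ℝ≥0) (g : Lp ℝ 2 m)
    (hsupp : ∀ᵐ x ∂m, r < φ x → (g : E → ℝ) x = 0) :
    ∀ᵐ x ∂m, r < φ x → (T t g) x = 0 := by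
  have hpp : 0 ≤ Lp.posPart g := by
    rw [← Lp.coeFn_nonneg]; filter_upwards [Lp.coeFn_posPart g] with x h; simp [h]
  have hnp : 0 ≤ Lp.negPart g := by
    rw [← Lp.coeFn_nonneg]; filter_upwards [Lp.coeFn_negPart g] with x h
    simp [h, neg_nonneg, min_le_right, le_min_iff]
  have hps : ∀ᵐ x ∂m, (φ x - r) * (Lp.posPart g) x ≤ 0 := by
    filter_upwards [Lp.coeFn_posPart g, hsupp] with x h1 h2
    rcases le_or_gt (φ x) r with hx | hx
    · refine mul_nonpos_of_nonpos_of_nonneg (by linarith) (h1 ▸ le_max_right _ _)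
    · rw [h1, h2 hx]; simp
  have hns : ∀ᵐ x ∂m, (φ x - r) * (Lp.negPart g) x ≤ 0 := by
    filter_upwards [Lp.coeFn_negPart g, hsupp] with x h1 h2
    rcases le_or_gt (φ x) r with hx | hx
    · refine mul_nonpos_of_nonpos_of_nonneg (by linarith) ?_
      rw [h1]; simp [le_min_iff, neg_nonneg, min_le_right]
    · rw [h1, h2 hx]; simp
  have h1 := aux_lower_nonneg hTpos hφmeas hφbd hcomm r t (Lp.posPart g) hpp hps
  have h2 := aux_lower_nonneg hTpos hφmeas hφbd hcomm r t (Lp.negPart g) hnp hns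
  have hdec : Lp.posPart g - Lp.negPart g = g := by
    apply Lp.ext
    filter_upwards [Lp.coeFn_sub (Lp.posPart g) (Lp.negPart g), Lp.coeFn_posPart g,
      Lp.coeFn_negPart g] with x ha hb hc
    simp only [ha, Pi.sub_apply, hb, hc]
    rcases le_or_gt (g x) 0 with h | h
    · rw [max_eq_right h, min_eq_left h]; ring
    · rw [max_eq_left h.le, min_eq_right h.le]; ring
  have hsplit : (T t g : E → ℝ) =ᵐ[m]
      fun x => (T t (Lp.posPart g)) x - (T t (Lp.negPart g)) x := by
    conv_lhs => rw [← hdec]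
    rw [map_sub]
    exact Lp.coeFn_sub _ _
  filter_upwards [hsplit, h1, h2] with x ha hb hc hlt
  rw [ha, hb hlt, hc hlt, sub_zero]

/-- If `m {φ = r} = 0` then `{r < φ}` is invariant. -/
lemma aux_inv
    (hTpos : ∀ t, ∀ f : Lp ℝ 2 m, 0 ≤ f → 0 ≤ T t f)
    (hφmeas : Measurable φ) (hφbd : ∀ x, |φ x| ≤ c)
    (hcomm : ∀ t : ℝ≥0, ∀ f g : Lp ℝ 2 m, (g : E → ℝ) =ᵐ[m] (fun x => φ x * f x) →
      (T t g : E → ℝ) =ᵐ[m] fun x => φ x * (T t f) x)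
    (r : ℝ) (hr : m {x | φ x = r} = 0) :
    IsInvariantSet m T {x | r < φ x} := by
  intro t f g hg
  set A : Set E := {x | r < φ x} with hA
  have hsupp_g : ∀ᵐ x ∂m, φ x ≤ r → (g : E → ℝ) x = 0 := by
    filter_upwards [hg] with x hx hle
    rw [hx, Set.indicator_of_notMem (by simpa [hA] using not_lt.2 hle)]
  have hTg0 := aux_upper hTpos hφmeas hφbd hcomm r t g hsupp_g
  have hh : ((f - g : Lp ℝ 2 m) : E → ℝ) =ᵐ[m] fun x => f x - g x := Lp.coeFn_sub f g
  have hsupp_h : ∀ᵐ x ∂m, r < φ x → ((f - g : Lp ℝ 2 m) : E → ℝ) x = 0 := by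
    filter_upwards [hh, hg] with x hx hgx hlt
    rw [hx, hgx, Set.indicator_of_mem (by simpa [hA] using hlt), sub_self]
  have hTh0 := aux_lower hTpos hφmeas hφbd hcomm r t (f - g) hsupp_h
  have hfe : g + (f - g) = f := add_sub_cancel g f
  have hsplit : (T t f : E → ℝ) =ᵐ[m]
      fun x => (T t g) x + (T t (f - g)) x := by
    conv_lhs => rw [← hfe]
    rw [map_add]
    exact Lp.coeFn_add _ _
  have hne : ∀ᵐ x ∂m, φ x ≠ r := by
    rw [ae_iff]
    simpa using hr
  filter_upwards [hTg0, hTh0, hsplit, hne] with x h1 h2 h3 h4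
  rcases lt_or_ge r (φ x) with hx | hx
  · rw [Set.indicator_of_mem (by simpa [hA] using hx), h3, h2 hx, add_zero]
  · rw [Set.indicator_of_notMem (by simpa [hA] using not_lt.2 hx),
      h1 (lt_of_le_of_ne hx h4)]

end Aux

/-- If a strongly continuous symmetric positivity preserving irreducible semigroup
`(T_t)` on `L²(E,m)` commutes with multiplication by a bounded measurable positive
function `φ` (with bounded inverse), i.e. `φ·T_t f = T_t(φ·f)` for all `t, f`,
then `φ` is constant `m`-a.e. -/
theorem stmt_18 {E : Type*} [MeasurableSpace E] (m : Measure E) [SigmaFinite m]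
    (T : ℝ≥0 → (Lp ℝ 2 m →L[ℝ] Lp ℝ 2 m))
    (hT0 : T 0 = ContinuousLinearMap.id ℝ _)
    (hTsg : ∀ s t : ℝ≥0, T (s + t) = (T s).comp (T t))
    (hTsymm : ∀ t, ∀ f g : Lp ℝ 2 m, ∫ x, (T t f) x * g x ∂m = ∫ x, f x * (T t g) x ∂m)
    (hTpos : ∀ t, ∀ f : Lp ℝ 2 m, 0 ≤ f → 0 ≤ T t f)
    (hTcont : ∀ f : Lp ℝ 2 m, Continuous fun t : ℝ≥0 => T t f)
    (hTirr : IsIrreducibleSemigroup m T)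
    (φ : E → ℝ) (hφmeas : Measurable φ)
    (c : ℝ) (hc : 0 < c) (hφbd : ∀ x, c⁻¹ ≤ φ x ∧ φ x ≤ c)
    (hcomm : ∀ t : ℝ≥0, ∀ f g : Lp ℝ 2 m, (g : E → ℝ) =ᵐ[m] (fun x => φ x * f x) →
      (T t g : E → ℝ) =ᵐ[m] fun x => φ x * (T t f) x) :
    ∃ a : ℝ, ∀ᵐ x ∂m, φ x = a := by
  have hφabs : ∀ x, |φ x| ≤ c := fun x => by
    have h1 := (hφbd x).1
    have h2 := (hφbd x).2
    have : (0 : ℝ) < φ x := lt_of_lt_of_le (inv_pos.2 hc) h1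
    rw [abs_of_pos this]; exact h2
  have hdich : ∀ r : ℝ, m {x | φ x = r} = 0 →
      m {x | r < φ x} = 0 ∨ m {x | r < φ x}ᶜ = 0 := fun r hr0 =>
    hTirr {x | r < φ x} (measurableSet_lt measurable_const hφmeas)
      (aux_inv hTpos hφmeas hφabs hcomm r hr0)
  rcases eq_or_ne m 0 with hm | hm
  · exact ⟨0, by simp [hm]⟩
  have hbad : Set.Countable {r : ℝ | 0 < m {x | φ x = r}} :=
    Measure.countable_meas_level_set_pos hφmeas
  set S : Set ℝ := {r | ∀ᵐ x ∂m, φ x ≤ r} with hS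
  have hSne : S.Nonempty := ⟨c, show ∀ᵐ x ∂m, φ x ≤ c from Filter.Eventually.of_forall fun x => (hφbd x).2⟩
  have hSbdd : BddBelow S := by
    refine ⟨0, fun r hr => ?_⟩
    haveI := ae_neBot.2 hm
    obtain ⟨x, hx⟩ := (show ∀ᵐ x ∂m, φ x ≤ r from hr).exists
    have := (hφbd x).1
    have : (0 : ℝ) < φ x := lt_of_lt_of_le (inv_pos.2 hc) this
    linarith
  set a : ℝ := sInf S with ha
  refine ⟨a, ?_⟩
  have hle : ∀ᵐ x ∂m, φ x ≤ a := by
    have h1 : ∀ n : ℕ, ∀ᵐ x ∂m, φ x ≤ a + 1 / (n + 1) := by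
      intro n
      have hlt : a < a + 1 / (n + 1) := by
        have : (0 : ℝ) < 1 / (n + 1) := by positivity
        linarith
      obtain ⟨s, hsS, hs⟩ := exists_lt_of_csInf_lt hSne hlt
      filter_upwards [hsS] with x hx
      linarith
    have h2 := ae_all_iff.2 h1
    filter_upwards [h2] with x hx
    refine le_of_forall_pos_le_add fun ε hε => ?_
    obtain ⟨n, hn⟩ := exists_nat_one_div_lt hε
    have := hx n
    push_cast at this hn ⊢
    linarith
  have hge : ∀ᵐ x ∂m, a ≤ φ x := by
    have h1 : ∀ n : ℕ, ∀ᵐ x ∂m, a - 1 / (n + 1) ≤ φ x := by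
      intro n
      -- find a good level r in (a - 1/(n+1), a)
      have hIoo : ¬ (Set.Ioo (a - 1 / (n + 1)) a).Countable := by
        intro hcount
        have h0 := hcount.measure_zero (volume : Measure ℝ)
        rw [Real.volume_Ioo] at h0
        have hpos : (0 : ℝ) < 1 / (n + 1) := by positivity
        simp only [show a - (a - 1 / (n + 1)) = 1 / (n + 1) by ring] at h0
        exact (ENNReal.ofReal_pos.2 hpos).ne' h0
      have : ¬ (Set.Ioo (a - 1 / (n + 1)) a ⊆ {r : ℝ | 0 < m {x | φ x = r}}) :=
        fun hsub => hIoo (hbad.mono hsub)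
      obtain ⟨r, hrI, hrgood⟩ := Set.not_subset.1 this
      have hr0 : m {x | φ x = r} = 0 := by
        by_contra hne
        exact hrgood (pos_iff_ne_zero.2 hne)
      rcases hdich r hr0 with hcase | hcase
      · -- φ ≤ r a.e., so r ∈ S, contradicting r < a = sInf S
        exfalso
        have hrS : r ∈ S := by
          have : ∀ᵐ x ∂m, ¬ r < φ x := by rw [ae_iff]; simpa using hcase
          filter_upwards [this] with x hx
          exact not_lt.1 hx
        exact absurd (csInf_le hSbdd hrS) (not_le.2 hrI.2)
      · have : ∀ᵐ x ∂m, r < φ x := by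
          rw [ae_iff]
          simpa [Set.compl_setOf, not_lt] using hcase
        filter_upwards [this] with x hx
        have := hrI.1
        linarith
    have h2 := ae_all_iff.2 h1
    filter_upwards [h2] with x hx
    refine sub_nonneg.1 ?_
    by_contra hcon
    push_neg at hcon
    obtain ⟨n, hn⟩ := exists_nat_one_div_lt (neg_pos.2 hcon)
    have := hx n
    push_cast at this hn
    linarith
  filter_upwards [hle, hge] with x h1 h2
  exact le_antisymm h1 h2
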